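/- There exist constants c, C > 0 such that for every δ ∈ (0, 1] and all ξ, ξ₁ ∈ ℝ with |ξ| ≤ δ^{-1}, |ξ₁| ≤ δ^{-1}, and |ξ − ξ₁| ≤ δ^{-1}, the function μ(η) := Ξ̃_δ(ξ, η, ξ − η) is differentiable at η = ξ₁, and its derivative satisfies c·(ξ(ξ − 2ξ₁))² ≤ μ'(ξ₁)·ξ(ξ − 2ξ₁) and |μ'(ξ₁)| ≤ C·|ξ(ξ − 2ξ₁)|; in particular μ'(ξ₁) has the same sign as ξ(ξ − 2ξ₁) and |μ'(ξ₁)| is comparable to |ξ(ξ − 2ξ₁)| uniformly in δ. -/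

import Mathlib

open Real

/-- The Fourier multiplier of the scaled ILW dispersion operator:
`L_δ(ξ) = 6ξ² ∑_{k=1}^∞ 1/(k²π² + δ²ξ²)`. -/
noncomputable def Ldelta (δ ξ : ℝ) : ℝ :=
  6 * ξ ^ 2 * ∑' k : ℕ, 1 / (((k : ℝ) + 1) ^ 2 * Real.pi ^ 2 + δ ^ 2 * ξ ^ 2)

/-- The dispersion symbol `p̃_δ(ξ) = ξ·L_δ(ξ)` of the scaled ILW. -/
noncomputable def ptilde (δ ξ : ℝ) : ℝ := ξ * Ldelta δ ξ

/-- The resonance function `Ξ̃_δ(ξ, ξ₁, ξ₂) = p̃_δ(ξ) − p̃_δ(ξ₁) − p̃_δ(ξ₂)`. -/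
noncomputable def XiTilde (δ ξ ξ₁ ξ₂ : ℝ) : ℝ :=
  ptilde δ ξ - ptilde δ ξ₁ - ptilde δ ξ₂

lemma gdiff_eq (A a z w : ℝ) (hA : 0 < A) (ha : 0 < a) :
    w^2*(3*A + a*w^2)/(A + a*w^2)^2 - z^2*(3*A + a*z^2)/(A + a*z^2)^2
    = (w^2 - z^2) * (A * (3*A^2 + A*(a*z^2 + a*w^2) - (a*z^2)*(a*w^2))
        / ((A + a*z^2)^2 * (A + a*w^2)^2)) := by
  have h1 : (0:ℝ) < A + a*z^2 := by positivity
  have h2 : (0:ℝ) < A + a*w^2 := by positivity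
  field_simp
  ring

lemma Q_lb (A u v : ℝ) (hA : 1 ≤ A) (hu : 0 ≤ u) (hv : 0 ≤ v) (hu1 : u ≤ 1) (hv1 : v ≤ 1) :
    1/(8*A) ≤ A * (3*A^2 + A*(u + v) - u*v) / ((A + u)^2 * (A + v)^2) := by
  have hA0 : (0:ℝ) < A := by linarith
  rw [div_le_div_iff₀ (by positivity) (by positivity)]
  have h4u : (A+u)^2 ≤ 4*A^2 := by nlinarith
  have h4v : (A+v)^2 ≤ 4*A^2 := by nlinarith
  have hden : (A+u)^2*(A+v)^2 ≤ 16*A^4 := by nlinarith [sq_nonneg (A+u), sq_nonneg (A+v)]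
  have hp : u*v ≤ 1 := by nlinarith
  have hA2 : 1 ≤ A^2 := by nlinarith
  have hA4 : A^2 ≤ A^4 := by nlinarith
  have hs : 0 ≤ A*(u+v) := by positivity
  nlinarith [mul_le_of_le_one_right (by positivity : (0:ℝ) ≤ 8*A^2) hp,
    mul_le_mul_of_nonneg_left hA4 (by norm_num : (0:ℝ) ≤ 8),
    mul_nonneg (by positivity : (0:ℝ) ≤ 8*A^2) hs]

lemma Q_ub (A u v : ℝ) (hA : 1 ≤ A) (hu : 0 ≤ u) (hv : 0 ≤ v) (hu1 : u ≤ 1) (hv1 : v ≤ 1) :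
    A * (3*A^2 + A*(u + v) - u*v) / ((A + u)^2 * (A + v)^2) ≤ 5/A := by
  have hA0 : (0:ℝ) < A := by linarith
  rw [div_le_div_iff₀ (by positivity) (by positivity)]
  have hdu : A^2 ≤ (A+u)^2 := by nlinarith
  have hdv : A^2 ≤ (A+v)^2 := by nlinarith
  have hd : A^4 ≤ (A+u)^2*(A+v)^2 := by nlinarith [mul_le_mul hdu hdv (by positivity : (0:ℝ) ≤ A^2) (sq_nonneg (A+u))]
  have h1 : A*(u+v) ≤ 2*A^2 := by nlinarith
  have h2 : 0 ≤ u*v := by positivity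
  nlinarith [mul_pos hA0 hA0, mul_le_mul_of_nonneg_left h1 (by positivity : (0:ℝ) ≤ A^2)]

lemma Q_nonneg (A u v : ℝ) (hA : 1 ≤ A) (hu : 0 ≤ u) (hv : 0 ≤ v) (hu1 : u ≤ 1) (hv1 : v ≤ 1) :
    0 ≤ A * (3*A^2 + A*(u + v) - u*v) / ((A + u)^2 * (A + v)^2) := by
  have := Q_lb A u v hA hu hv hu1 hv1
  have hA0 : (0:ℝ) < A := by linarith
  have : (0:ℝ) < 1/(8*A) := by positivity
  linarith [Q_lb A u v hA hu hv hu1 hv1]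


/-- Auxiliary: `A k = (k+1)² π²`. -/
noncomputable def Ak (k : ℕ) : ℝ := ((k : ℝ) + 1) ^ 2 * Real.pi ^ 2

lemma one_le_Ak (k : ℕ) : 1 ≤ Ak k := by
  have h1 : (1:ℝ) ≤ ((k:ℝ)+1)^2 := by nlinarith [Nat.cast_nonneg (α := ℝ) k]
  have h2 : (1:ℝ) ≤ π^2 := by nlinarith [pi_gt_three]
  have := mul_le_mul h1 h2 (by norm_num) (by positivity)
  simpa [Ak] using this

lemma Ak_pos (k : ℕ) : 0 < Ak k := lt_of_lt_of_le one_pos (one_le_Ak k)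

lemma hasSum_inv_Ak : HasSum (fun k : ℕ => 1 / Ak k) (1/6) := by
  have hb : HasSum (fun k : ℕ => 1/(((k:ℝ)+1)^2)) (π^2/6) := by
    have h := hasSum_zeta_two
    have h2 := (hasSum_nat_add_iff' (f := fun n : ℕ => (1:ℝ)/(n:ℝ)^2) 1).mpr h
    simp only [Finset.range_one, Finset.sum_singleton, Nat.cast_zero] at h2
    norm_num at h2
    simpa only [one_div] using h2
  have h3 := hb.mul_left (1/π^2)
  have hpi := pi_ne_zero
  have he : (fun k : ℕ => 1 / Ak k) = fun k : ℕ => (1/π^2) * (1/(((k:ℝ)+1)^2)) := by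
    funext k
    have : ((k:ℝ)+1)^2 ≠ 0 := by positivity
    field_simp [Ak]
    simp only [Ak]
    ring
  rw [he, show (1:ℝ)/6 = (1/π^2)*(π^2/6) by field_simp]
  exact h3

lemma summable_inv_Ak : Summable (fun k : ℕ => 1 / Ak k) := hasSum_inv_Ak.summable

lemma Gprime_le (A a z : ℝ) (hA : 1 ≤ A) (ha : 0 < a) :
    z^2*(3*A + a*z^2)/(A + a*z^2)^2 ≤ (3*z^2 + a*z^4) * (1/A) := by
  have hA0 : (0:ℝ) < A := by linarith
  rw [mul_one_div, div_le_div_iff₀ (by positivity) (by positivity)]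
  have h1 : A^2 ≤ (A + a*z^2)^2 := by nlinarith [sq_nonneg z, mul_nonneg ha.le (sq_nonneg z)]
  have hz4 : (0:ℝ) ≤ z^4 := by nlinarith [sq_nonneg (z^2)]
  have h2 : (0:ℝ) ≤ a*z^4*(A^2 - A) := by
    apply mul_nonneg (mul_nonneg ha.le hz4); nlinarith
  have h3 : (0:ℝ) ≤ 3*z^2 + a*z^4 := by nlinarith [sq_nonneg z, mul_nonneg ha.le hz4]
  nlinarith [mul_le_mul_of_nonneg_left h1 h3]

lemma Gprime_nonneg (A a z : ℝ) (hA : 1 ≤ A) (ha : 0 < a) :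
    0 ≤ z^2*(3*A + a*z^2)/(A + a*z^2)^2 := by
  have : (0:ℝ) < A := by linarith
  positivity

lemma summable_Gprime (a z : ℝ) (ha : 0 < a) :
    Summable (fun k : ℕ => z^2*(3*Ak k + a*z^2)/(Ak k + a*z^2)^2) := by
  refine Summable.of_nonneg_of_le (fun k => Gprime_nonneg (Ak k) a z (one_le_Ak k) ha)
    (fun k => Gprime_le (Ak k) a z (one_le_Ak k) ha) ?_
  exact summable_inv_Ak.mul_left _

/-- derivative of `p̃_δ`. -/
lemma ptilde_hasDerivAt (δ : ℝ) (hδ : 0 < δ) (y : ℝ) :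
    HasDerivAt (ptilde δ)
      (6 * ∑' k : ℕ, y^2*(3*Ak k + δ^2*y^2)/(Ak k + δ^2*y^2)^2) y := by
  have ha : (0:ℝ) < δ^2 := by positivity
  -- rewrite ptilde as a nice series
  have hpt : ptilde δ = fun z : ℝ => 6 * ∑' k : ℕ, z^3/(Ak k + δ^2*z^2) := by
    funext z
    have he : (fun k : ℕ => z^3/(Ak k + δ^2*z^2))
        = fun k : ℕ => z^3 * (1/(Ak k + δ^2*z^2)) := by
      funext k; rw [mul_one_div]
    rw [ptilde, Ldelta, he, tsum_mul_left]
    show z * (6*z^2*∑' k : ℕ, 1 / (((k:ℝ)+1)^2*π^2 + δ^2*z^2)) = _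
    simp only [Ak]
    ring
  rw [hpt]
  set R : ℝ := |y| + 1 with hR
  have hRpos : 0 < R := by positivity
  have hmem : y ∈ Set.Ioo (-R) R := by
    constructor <;> [nlinarith [abs_nonneg y, neg_abs_le y]; nlinarith [le_abs_self y]]
  have hderiv : HasDerivAt (fun z : ℝ => ∑' k : ℕ, z^3/(Ak k + δ^2*z^2))
      (∑' k : ℕ, y^2*(3*Ak k + δ^2*y^2)/(Ak k + δ^2*y^2)^2) y := by
    apply hasDerivAt_tsum_of_isPreconnected
      (u := fun k : ℕ => (3*R^2 + δ^2*R^4) * (1/Ak k))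
      (summable_inv_Ak.mul_left _) isOpen_Ioo isPreconnected_Ioo
      ?_ ?_ hmem ?_ hmem
    · -- pointwise derivative
      intro k z _
      have hden0 : (0:ℝ) < Ak k + δ^2*z^2 := by
        nlinarith [Ak_pos k, mul_nonneg (sq_nonneg δ) (sq_nonneg z)]
      have hden : Ak k + δ^2*z^2 ≠ 0 := ne_of_gt hden0
      have h1 : HasDerivAt (fun z : ℝ => z^3) (3*z^2) z := by
        simpa using hasDerivAt_pow 3 z
      have h2 : HasDerivAt (fun z : ℝ => Ak k + δ^2*z^2) (δ^2*(2*z)) z := by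
        have := ((hasDerivAt_pow 2 z).const_mul (δ^2)).const_add (Ak k)
        simpa using this
      have := h1.div h2 hden
      refine this.congr_deriv ?_
      field_simp
      ring
    · -- bound on the derivative on the ball
      intro k z hz
      have hz2 : z^2 ≤ R^2 := by
        rcases hz with ⟨h1, h2⟩; nlinarith
      have hz4 : z^4 ≤ R^4 := by nlinarith [sq_nonneg z, sq_nonneg R]
      have hnn := Gprime_nonneg (Ak k) (δ^2) z (one_le_Ak k) ha
      rw [Real.norm_eq_abs, abs_of_nonneg hnn]
      calc z^2*(3*Ak k + δ^2*z^2)/(Ak k + δ^2*z^2)^2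
          ≤ (3*z^2 + δ^2*z^4) * (1/Ak k) := Gprime_le (Ak k) (δ^2) z (one_le_Ak k) ha
        _ ≤ (3*R^2 + δ^2*R^4) * (1/Ak k) := by
            apply mul_le_mul_of_nonneg_right _ (le_of_lt (one_div_pos.mpr (Ak_pos k)))
            nlinarith
    · -- summability at the base point
      apply Summable.of_norm
      refine Summable.of_nonneg_of_le (fun k => norm_nonneg _) (fun k => ?_)
        (summable_inv_Ak.mul_left (|y|^3))
      have hden : (0:ℝ) < Ak k + δ^2*y^2 := by
        nlinarith [Ak_pos k, mul_nonneg (sq_nonneg δ) (sq_nonneg y)]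
      rw [Real.norm_eq_abs, abs_div, abs_of_pos hden, mul_one_div]
      apply div_le_div_of_nonneg_left ?alpha ?beta ?gamma |>.trans
      case alpha => exact abs_nonneg _
      case beta => exact Ak_pos k
      case gamma => linarith [mul_nonneg (sq_nonneg δ) (sq_nonneg y)]
      · rw [abs_pow]
  exact hderiv.const_mul 6



/-- The derivative of `η ↦ Ξ̃_δ(ξ, η, ξ − η)` at `η = ξ₁` has the same sign as
`ξ(ξ − 2ξ₁)` and magnitude comparable to `|ξ(ξ − 2ξ₁)|`, uniformly in
`δ ∈ (0,1]`, on frequencies `|ξ|, |ξ₁|, |ξ − ξ₁| ≤ δ⁻¹`. -/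
theorem XiTilde_deriv_comparable :
    ∃ c > 0, ∃ C > 0, ∀ δ ∈ Set.Ioc (0 : ℝ) 1, ∀ ξ ξ₁ : ℝ,
      |ξ| ≤ δ⁻¹ → |ξ₁| ≤ δ⁻¹ → |ξ - ξ₁| ≤ δ⁻¹ →
      ∃ d : ℝ, HasDerivAt (fun η : ℝ => XiTilde δ ξ η (ξ - η)) d ξ₁ ∧
        c * (ξ * (ξ - 2 * ξ₁)) ^ 2 ≤ d * (ξ * (ξ - 2 * ξ₁)) ∧
        |d| ≤ C * |ξ * (ξ - 2 * ξ₁)| := by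
  refine ⟨1/16, by norm_num, 5, by norm_num, ?_⟩
  rintro δ ⟨hδ0, hδ1⟩ ξ ξ₁ hξ hξ₁ hw
  have ha : (0:ℝ) < δ^2 := by positivity
  have hδne : δ ≠ 0 := ne_of_gt hδ0
  have hb : ∀ z : ℝ, |z| ≤ δ⁻¹ → δ^2 * z^2 ≤ 1 := by
    intro z hz
    have h1 : z^2 ≤ (δ⁻¹)^2 := by
      rw [← sq_abs]; exact pow_le_pow_left₀ (abs_nonneg z) hz 2
    calc δ^2*z^2 ≤ δ^2*(δ⁻¹)^2 := by nlinarith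
      _ = 1 := by field_simp
  have hu1 : δ^2 * ξ₁^2 ≤ 1 := hb ξ₁ hξ₁
  have hv1 : δ^2 * (ξ - ξ₁)^2 ≤ 1 := hb (ξ - ξ₁) hw
  have hu0 : (0:ℝ) ≤ δ^2*ξ₁^2 := by positivity
  have hv0 : (0:ℝ) ≤ δ^2*(ξ - ξ₁)^2 := by positivity
  -- derivatives of ptilde
  have hP1 := ptilde_hasDerivAt δ hδ0 ξ₁
  have hP2 := ptilde_hasDerivAt δ hδ0 (ξ - ξ₁)
  have hneg : HasDerivAt (fun η : ℝ => ξ - η) (-1 : ℝ) ξ₁ := by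
    simpa using (hasDerivAt_id ξ₁).const_sub ξ
  have hcomp : HasDerivAt (fun η : ℝ => ptilde δ (ξ - η))
      ((6 * ∑' k : ℕ, (ξ-ξ₁)^2*(3*Ak k + δ^2*(ξ-ξ₁)^2)/(Ak k + δ^2*(ξ-ξ₁)^2)^2) * (-1)) ξ₁ := by
    exact HasDerivAt.comp ξ₁ hP2 hneg
  have hXi : HasDerivAt (fun η : ℝ => XiTilde δ ξ η (ξ - η))
      ((6 * ∑' k : ℕ, (ξ-ξ₁)^2*(3*Ak k + δ^2*(ξ-ξ₁)^2)/(Ak k + δ^2*(ξ-ξ₁)^2)^2)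
        - (6 * ∑' k : ℕ, ξ₁^2*(3*Ak k + δ^2*ξ₁^2)/(Ak k + δ^2*ξ₁^2)^2)) ξ₁ := by
    have h := ((hasDerivAt_const ξ₁ (ptilde δ ξ)).sub hP1).sub hcomp
    refine h.congr_deriv ?_
    ring
  -- the series manipulation
  have hS1 : Summable (fun k : ℕ => ξ₁^2*(3*Ak k + δ^2*ξ₁^2)/(Ak k + δ^2*ξ₁^2)^2) :=
    summable_Gprime (δ^2) ξ₁ ha
  have hS2 : Summable (fun k : ℕ => (ξ-ξ₁)^2*(3*Ak k + δ^2*(ξ-ξ₁)^2)/(Ak k + δ^2*(ξ-ξ₁)^2)^2) :=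
    summable_Gprime (δ^2) (ξ - ξ₁) ha
  set Q : ℕ → ℝ := fun k =>
    Ak k * (3*(Ak k)^2 + Ak k*(δ^2*ξ₁^2 + δ^2*(ξ-ξ₁)^2) - (δ^2*ξ₁^2)*(δ^2*(ξ-ξ₁)^2))
      / ((Ak k + δ^2*ξ₁^2)^2 * (Ak k + δ^2*(ξ-ξ₁)^2)^2) with hQdef
  have hQnn : ∀ k, 0 ≤ Q k := fun k =>
    Q_nonneg (Ak k) _ _ (one_le_Ak k) hu0 hv0 hu1 hv1
  have hQub : ∀ k, Q k ≤ 5 * (1/Ak k) := by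
    intro k
    rw [mul_one_div]
    exact Q_ub (Ak k) _ _ (one_le_Ak k) hu0 hv0 hu1 hv1
  have hQsum : Summable Q :=
    Summable.of_nonneg_of_le hQnn hQub (summable_inv_Ak.mul_left 5)
  have hdiff : ∀ k : ℕ,
      (ξ-ξ₁)^2*(3*Ak k + δ^2*(ξ-ξ₁)^2)/(Ak k + δ^2*(ξ-ξ₁)^2)^2
        - ξ₁^2*(3*Ak k + δ^2*ξ₁^2)/(Ak k + δ^2*ξ₁^2)^2
      = (ξ * (ξ - 2*ξ₁)) * Q k := by
    intro k
    have h := gdiff_eq (Ak k) (δ^2) ξ₁ (ξ - ξ₁) (Ak_pos k) ha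
    rw [h, hQdef]
    have hm : (ξ-ξ₁)^2 - ξ₁^2 = ξ * (ξ - 2*ξ₁) := by ring
    rw [hm]
  have hsum_eq :
      (6 * ∑' k : ℕ, (ξ-ξ₁)^2*(3*Ak k + δ^2*(ξ-ξ₁)^2)/(Ak k + δ^2*(ξ-ξ₁)^2)^2)
        - (6 * ∑' k : ℕ, ξ₁^2*(3*Ak k + δ^2*ξ₁^2)/(Ak k + δ^2*ξ₁^2)^2)
      = 6 * ((ξ * (ξ - 2*ξ₁)) * ∑' k, Q k) := by
    rw [← mul_sub, ← Summable.tsum_sub hS2 hS1]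
    rw [tsum_congr hdiff, tsum_mul_left]
  -- bounds on the sum of Q
  have hSQ0 : 0 ≤ ∑' k, Q k := tsum_nonneg hQnn
  have hSQlb : 1/(8*π^2) ≤ ∑' k, Q k := by
    have h0 : 1/(8*Ak 0) ≤ Q 0 := Q_lb (Ak 0) _ _ (one_le_Ak 0) hu0 hv0 hu1 hv1
    have h1 : Q 0 ≤ ∑' k, Q k := Summable.le_tsum hQsum 0 (fun k _ => hQnn k)
    have h2 : Ak 0 = π^2 := by norm_num [Ak]
    rw [h2] at h0
    linarith
  have hSQub : ∑' k, Q k ≤ 5/6 := by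
    have h1 := Summable.tsum_le_tsum hQub hQsum (summable_inv_Ak.mul_left 5)
    have h2 : ∑' k : ℕ, 5 * (1/Ak k) = 5 * (1/6) := by
      rw [tsum_mul_left, hasSum_inv_Ak.tsum_eq]
    rw [h2] at h1
    linarith
  have hπ12 : π^2 ≤ 12 := by nlinarith [pi_lt_d2, pi_gt_three]
  have hSQ96 : 1/96 ≤ ∑' k, Q k := by
    have h96 : 8*π^2 ≤ 96 := by linarith
    have := one_div_le_one_div_of_le (by positivity : (0:ℝ) < 8*π^2) h96
    linarith
  refine ⟨_, hXi, ?_, ?_⟩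
  · rw [hsum_eq]
    nlinarith [mul_le_mul_of_nonneg_right hSQ96 (sq_nonneg (ξ * (ξ - 2*ξ₁)))]
  · rw [hsum_eq]
    have habs : |6 * ((ξ * (ξ - 2*ξ₁)) * ∑' k, Q k)|
        = 6 * (|ξ * (ξ - 2*ξ₁)| * ∑' k, Q k) := by
      rw [abs_mul, abs_mul, abs_of_nonneg hSQ0]
      norm_num
    rw [habs]
    nlinarith [abs_nonneg (ξ * (ξ - 2*ξ₁)),
      mul_le_mul_of_nonneg_left hSQub (abs_nonneg (ξ * (ξ - 2*ξ₁)))]
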